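/- Let T be a triangle with apex a, apex angle 2π/5, whose opposite side contains a point b such that the angle α between ab and the bisector-side satisfies 0 ≤ α ≤ π/10. Split T along ab into left triangle T^ℓ (containing the left base vertex ℓ) and right triangle T^r (containing the right base vertex r). Then |bℓ| ≤ |ba| and |br| ≤ |ba|, and hence every point p ∈ T satisfies |bp| ≤ |ba|. -/

import Mathlib

open Real Complex

theorem canonical_triangle_dist (D α : ℝ) (hD : 0 < D) (hα0 : 0 ≤ α) (hα1 : α ≤ π / 10)
    (a b l r : ℂ)
    (ha : a = 0)
    (hb : b = (D : ℂ) * (Real.sin α + Real.cos α * Complex.I))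
    (hl : l = (D : ℂ) * (Real.cos α : ℂ) * (-(Real.tan (π / 5)) + Complex.I))
    (hr : r = (D : ℂ) * (Real.cos α : ℂ) * ((Real.tan (π / 5)) + Complex.I)) :
    dist b l ≤ dist b a ∧ dist b r ≤ dist b a ∧
      ∀ p ∈ convexHull ℝ ({a, l, r} : Set ℂ), dist b p ≤ dist b a := by
  have hπ : (0:ℝ) < π := Real.pi_pos
  have hc : 0 < Real.cos (π/5) := Real.cos_pos_of_mem_Ioo (by constructor <;> nlinarith)
  have hsc : Real.sin (π/5) ≤ Real.cos (π/5) := by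
    rw [← Real.sin_pi_div_two_sub]
    apply Real.strictMonoOn_sin.monotoneOn (by constructor <;> nlinarith)
      (by constructor <;> nlinarith) (by nlinarith)
  have htan1 : Real.tan (π/5) ≤ 1 := by
    rw [Real.tan_eq_sin_div_cos, div_le_one hc]; exact hsc
  have htan0 : 0 ≤ Real.tan (π/5) := by
    rw [Real.tan_eq_sin_div_cos]
    exact div_nonneg (Real.sin_nonneg_of_nonneg_of_le_pi (by positivity) (by nlinarith)) hc.le
  have hs0 : 0 ≤ Real.sin α := Real.sin_nonneg_of_nonneg_of_le_pi hα0 (by nlinarith)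
  have hs1 : Real.sin α ≤ 1 := Real.sin_le_one α
  have hco0 : 0 ≤ Real.cos α := Real.cos_nonneg_of_mem_Icc (by constructor <;> nlinarith)
  have hco1 : Real.cos α ≤ 1 := Real.cos_le_one α
  -- key inequality for l
  have hkey : Real.sin α + Real.cos α * Real.tan (π/5) ≤ 1 := by
    rw [Real.tan_eq_sin_div_cos]
    rw [show Real.sin α + Real.cos α * (Real.sin (π/5) / Real.cos (π/5))
        = (Real.sin α * Real.cos (π/5) + Real.cos α * Real.sin (π/5)) / Real.cos (π/5) by
      field_simp]
    rw [div_le_one hc, ← Real.sin_add, ← Real.sin_pi_div_two_sub]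
    apply Real.strictMonoOn_sin.monotoneOn (by constructor <;> nlinarith)
      (by constructor <;> nlinarith) (by nlinarith)
  have hba : dist b a = D := by
    rw [hb, ha, dist_zero_right]
    simp only [Complex.norm_def, Complex.normSq_apply]
    simp [Complex.mul_re, Complex.mul_im, -Complex.ofReal_sin, -Complex.ofReal_cos]
    rw [show D*Real.sin α*(D*Real.sin α) + D*Real.cos α*(D*Real.cos α)
        = D^2 * (Real.sin α^2 + Real.cos α^2) by ring, Real.sin_sq_add_cos_sq, mul_one,
      Real.sqrt_sq hD.le]
  have hbl : dist b l ≤ D := by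
    rw [hb, hl, Complex.dist_eq]
    rw [show (D : ℂ) * (Real.sin α + Real.cos α * Complex.I)
        - (D : ℂ) * (Real.cos α : ℂ) * (-(Real.tan (π/5)) + Complex.I)
        = ((D * (Real.sin α + Real.cos α * Real.tan (π/5)) : ℝ) : ℂ) by push_cast; ring]
    rw [Complex.norm_real, Real.norm_eq_abs, abs_le]
    constructor <;> nlinarith [mul_nonneg hco0 htan0, mul_nonneg hD.le (add_nonneg hs0 (mul_nonneg hco0 htan0))]
  have hbr : dist b r ≤ D := by
    rw [hb, hr, Complex.dist_eq]
    rw [show (D : ℂ) * (Real.sin α + Real.cos α * Complex.I)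
        - (D : ℂ) * (Real.cos α : ℂ) * ((Real.tan (π/5)) + Complex.I)
        = ((D * (Real.sin α - Real.cos α * Real.tan (π/5)) : ℝ) : ℂ) by push_cast; ring]
    rw [Complex.norm_real, Real.norm_eq_abs, abs_mul, abs_of_pos hD]
    have : |Real.sin α - Real.cos α * Real.tan (π/5)| ≤ 1 := by
      rw [abs_le]; constructor <;> nlinarith
    nlinarith
  refine ⟨hba ▸ hbl, hba ▸ hbr, ?_⟩
  intro p hp
  have hsub : ({a, l, r} : Set ℂ) ⊆ Metric.closedBall b (dist b a) := by
    intro x hx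
    rcases hx with h | h | h <;>
        rw [Metric.mem_closedBall, h, dist_comm, hba]
    · exact hbl
    · exact hbr
  have := convexHull_min hsub (convex_closedBall b (dist b a)) hp
  simpa [dist_comm] using this
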